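/- Let 𝒜 be a skeletally small abelian category, X an object of 𝒜, and Δ and Γ subobject chains of X. Then both the lower conflation con⁻(Δ,Γ) and the upper conflation con⁺(Δ,Γ) are subobject chains of X which are refinements of Δ. -/

import Mathlib

open CategoryTheory CategoryTheory.Limits

universe w v u

namespace JHS

variable {𝒜 : Type u} [Category.{v} 𝒜] [Abelian 𝒜]

variable {X : 𝒜}

/-- The diagram in `𝒜` associated to a set of subobjects of `X`, given by the underlying
objects and the canonical inclusion monomorphisms between them. -/
@[simps]
noncomputable def chainDiagram (Δ : Set (Subobject X)) : Δ ⥤ 𝒜 where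
  obj Y := (Y.1 : 𝒜)
  map {Y Z} f := Subobject.ofLE Y.1 Z.1 (leOfHom f)
  map_id Y := Subobject.ofLE_refl Y.1
  map_comp {Y Z W} f g := (Subobject.ofLE_comp_ofLE Y.1 Z.1 W.1 (leOfHom f) (leOfHom g)).symm

/-- The cocone over the diagram of a set of subobjects of `X` with vertex an upper bound. -/
@[simps]
noncomputable def chainCocone (Δ : Set (Subobject X)) (W : Subobject X) (h : ∀ Y ∈ Δ, Y ≤ W) :
    Cocone (chainDiagram Δ) where
  pt := (W : 𝒜)
  ι :=
    { app := fun Y => Subobject.ofLE Y.1 W (h Y.1 Y.2)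
      naturality := fun Y Z f => by
        simp [chainDiagram, Subobject.ofLE_comp_ofLE] }

/-- The cone over the diagram of a set of subobjects of `X` with vertex a lower bound. -/
@[simps]
noncomputable def chainCone (Δ : Set (Subobject X)) (W : Subobject X) (h : ∀ Y ∈ Δ, W ≤ Y) :
    Cone (chainDiagram Δ) where
  pt := (W : 𝒜)
  π :=
    { app := fun Y => Subobject.ofLE W Y.1 (h Y.1 Y.2)
      naturality := fun Y Z f => by
        simp [chainDiagram, Subobject.ofLE_comp_ofLE] }

/-- `W` is the colimit of the chain `Δ` of subobjects of `X`, as a subobject of `X`: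
the colimit of the diagram of inclusions exists and the induced morphism to `X` is a
monomorphism with image `W`.  Equivalently, the canonical cocone with vertex `W` is a
colimit cocone. -/
def IsColimSub (Δ : Set (Subobject X)) (W : Subobject X) : Prop :=
  ∃ h : ∀ Y ∈ Δ, Y ≤ W, Nonempty (IsColimit (chainCocone Δ W h))

/-- `W` is the limit of the chain `Δ` of subobjects of `X` (such a limit is automatically a
subobject of `X`): the canonical cone with vertex `W` is a limit cone. -/
def IsLimSub (Δ : Set (Subobject X)) (W : Subobject X) : Prop :=
  ∃ h : ∀ Y ∈ Δ, W ≤ Y, Nonempty (IsLimit (chainCone Δ W h))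

/-- A pre-subobject chain: a set of subobjects totally ordered under inclusion. -/
def IsPreChain (Δ : Set (Subobject X)) : Prop :=
  IsChain (· ≤ ·) Δ

/-- A subobject chain: a pre-subobject chain containing `⊥ = 0` and `⊤ = X`. -/
def IsSubChain (Δ : Set (Subobject X)) : Prop :=
  IsPreChain Δ ∧ ⊥ ∈ Δ ∧ ⊤ ∈ Δ

/-- A chain is cocomplete if every subset has a colimit which is a subobject of `X` and
lies in the chain. -/
def Cocomplete (Δ : Set (Subobject X)) : Prop :=
  ∀ Δ' ⊆ Δ, ∃ W ∈ Δ, IsColimSub Δ' W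

/-- A chain is complete if every subset has a limit which lies in the chain. -/
def Complete (Δ : Set (Subobject X)) : Prop :=
  ∀ Δ' ⊆ Δ, ∃ W ∈ Δ, IsLimSub Δ' W

/-- A chain is bicomplete if it is both cocomplete and complete. -/
def Bicomplete (Δ : Set (Subobject X)) : Prop :=
  Cocomplete Δ ∧ Complete Δ

/-- `W = Y⁻_Δ` is the predecessor of `Y` in `Δ`: the colimit of `{Z ∈ Δ | Z ⊊ Y}`,
with the convention `0⁻_Δ = 0`. -/
def IsPred (Δ : Set (Subobject X)) (Y W : Subobject X) : Prop :=
  (Y = ⊥ ∧ W = ⊥) ∨ (Y ≠ ⊥ ∧ IsColimSub {Z | Z ∈ Δ ∧ Z < Y} W)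

/-- `W = Y⁺_Δ` is the successor of `Y` in `Δ`: the limit of `{Z ∈ Δ | Y ⊊ Z}`,
with the convention `X⁺_Δ = X`. -/
def IsSucc (Δ : Set (Subobject X)) (Y W : Subobject X) : Prop :=
  (Y = ⊤ ∧ W = ⊤) ∨ (Y ≠ ⊤ ∧ IsLimSub {Z | Z ∈ Δ ∧ Y < Z} W)

/-- The quotient (subfactor) `Y/W` of two nested subobjects of `X`: the cokernel of the
inclusion `W → Y`. -/
noncomputable def quot (W Y : Subobject X) (h : W ≤ Y) : 𝒜 :=
  cokernel (Subobject.ofLE W Y h)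

/-- A composition series of `X`: a bicomplete subobject chain all of whose subfactors
`Y/Y⁻_Δ` (for `Y ∈ Δ` with `Y ≠ Y⁻_Δ`) are simple. -/
def IsCompSeries (Δ : Set (Subobject X)) : Prop :=
  IsSubChain Δ ∧ Bicomplete Δ ∧
    ∀ Y ∈ Δ, ∀ (W) (h : W ≤ Y), IsPred Δ Y W → W ≠ Y → Simple (quot W Y h)

variable (X) in
/-- Axiom (JHS1): `X` is subobject cocomplete. -/
def JHS1 : Prop :=
  ∀ Δ : Set (Subobject X), IsPreChain Δ → ∃ W, IsColimSub Δ W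

variable (X) in
/-- Axiom (JHS2): `X` is subobject complete. -/
def JHS2 : Prop :=
  ∀ Δ : Set (Subobject X), IsPreChain Δ → ∃ W, IsLimSub Δ W

variable (X) in
/-- Axiom (JHS3). -/
def JHS3 : Prop :=
  JHS1 X ∧ ∀ (Δ : Set (Subobject X)) (Z W : Subobject X),
    IsPreChain Δ → IsColimSub Δ W → IsColimSub ((· ⊓ Z) '' Δ) (W ⊓ Z)

variable (X) in
/-- Axiom (JHS4). -/
def JHS4 : Prop :=
  JHS2 X ∧ ∀ (Δ : Set (Subobject X)) (Z W : Subobject X),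
    IsPreChain Δ → IsLimSub Δ W → IsLimSub ((· ⊔ Z) '' Δ) (W ⊔ Z)

variable (X) in
/-- `X` is weakly Jordan–Hölder–Schreier. -/
def WeaklyJHS : Prop :=
  JHS3 X ∧ JHS4 X

variable (X) in
/-- Axiom (JHS5): if `X ≠ 0`, every composition series of `X` has a nonempty subfactor
multiset. -/
def JHS5 : Prop :=
  ¬ IsZero X → ∀ Δ : Set (Subobject X), IsCompSeries Δ →
    ∃ Y ∈ Δ, ∃ W, IsPred Δ Y W ∧ W ≠ Y

variable (X) in
/-- `X` is Jordan–Hölder–Schreier. -/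
def IsJHS : Prop :=
  WeaklyJHS X ∧ JHS5 X

/-- The index set of the lower subfactor multiset `sf⁻(Δ)`: elements `Y ∈ Δ` admitting a
predecessor `Y⁻_Δ ≠ Y`. -/
def lowerIdx (Δ : Set (Subobject X)) : Type _ :=
  {Y : Subobject X // Y ∈ Δ ∧ ∃ W, IsPred Δ Y W ∧ W ≠ Y}

/-- The index set of the upper subfactor multiset `sf⁺(Δ)`: elements `Y ∈ Δ` admitting a
successor `Y⁺_Δ ≠ Y`. -/
def upperIdx (Δ : Set (Subobject X)) : Type _ :=
  {Y : Subobject X // Y ∈ Δ ∧ ∃ W, IsSucc Δ Y W ∧ W ≠ Y}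

/-- Subfactor equivalence of two chains: a bijection of the index sets of their subfactor
multisets under which corresponding subfactors are isomorphic. -/
def SubfactorEquiv (Δ Γ : Set (Subobject X)) : Prop :=
  ∃ e : lowerIdx Δ ≃ lowerIdx Γ,
    ∀ (Y : lowerIdx Δ) (W : Subobject X) (hW : W ≤ Y.1) (V : Subobject X)
      (hV : V ≤ (e Y).1),
      IsPred Δ Y.1 W → IsPred Γ (e Y).1 V →
      Nonempty (quot W Y.1 hW ≅ quot V (e Y).1 hV)

/-- The lower conflation `con⁻(Δ, Γ)`. -/
def conLower (Δ Γ : Set (Subobject X)) : Set (Subobject X) :=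
  Δ ∪ {V | ∃ Y ∈ Δ, ∃ Z ∈ Γ, ∃ W, IsPred Δ Y W ∧ V = W ⊔ (Y ⊓ Z)}

/-- The upper conflation `con⁺(Δ, Γ)`. -/
def conUpper (Δ Γ : Set (Subobject X)) : Set (Subobject X) :=
  Δ ∪ {V | ∃ Y ∈ Δ, ∃ Z ∈ Γ, ∃ W, IsSucc Δ Y W ∧ V = Y ⊔ (W ⊓ Z)}


section Aux

lemma colim_le {S : Set (Subobject X)} {W V : Subobject X}
    (h : IsColimSub S W) (hV : ∀ Z ∈ S, Z ≤ V) : W ≤ V := by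
  obtain ⟨hb, ⟨hc⟩⟩ := h
  refine Subobject.le_of_comm (hc.desc (chainCocone S V hV)) ?_
  apply hc.hom_ext
  intro j
  erw [← Category.assoc]
  erw [hc.fac (chainCocone S V hV) j]
  simp [chainCocone]
  exact (Subobject.ofLE_arrow _).trans (Subobject.ofLE_arrow _).symm

lemma le_lim {S : Set (Subobject X)} {W V : Subobject X}
    (h : IsLimSub S W) (hne : S.Nonempty) (hV : ∀ Z ∈ S, V ≤ Z) : V ≤ W := by
  obtain ⟨hb, ⟨hc⟩⟩ := h
  obtain ⟨Z0, hZ0⟩ := hne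
  refine Subobject.le_of_comm (hc.lift (chainCone S V hV)) ?_
  have h1 : hc.lift (chainCone S V hV) ≫ (chainCone S W hb).π.app ⟨Z0, hZ0⟩
      = (chainCone S V hV).π.app ⟨Z0, hZ0⟩ := hc.fac _ _
  have h2 : (chainCone S W hb).π.app ⟨Z0, hZ0⟩ ≫ Z0.arrow = W.arrow := by
    simp [chainCone]
    exact Subobject.ofLE_arrow _
  have h3 : (chainCone S V hV).π.app ⟨Z0, hZ0⟩ ≫ Z0.arrow = V.arrow := by
    simp [chainCone]
    exact Subobject.ofLE_arrow _
  erw [← h2, ← Category.assoc, h1, h3]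

lemma pred_le {Δ : Set (Subobject X)} {Y W : Subobject X} (h : IsPred Δ Y W) : W ≤ Y := by
  rcases h with ⟨_, rfl⟩ | ⟨_, hW⟩
  · exact bot_le
  · exact colim_le hW fun Z hZ => hZ.2.le

lemma lt_pred_le {Δ : Set (Subobject X)} {Y W Z : Subobject X}
    (h : IsPred Δ Y W) (hZ : Z ∈ Δ) (hZY : Z < Y) : Z ≤ W := by
  rcases h with ⟨rfl, _⟩ | ⟨_, hb, _⟩
  · exact absurd hZY (by simp)
  · exact hb Z ⟨hZ, hZY⟩

lemma pred_unique {Δ : Set (Subobject X)} {Y W W' : Subobject X}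
    (h : IsPred Δ Y W) (h' : IsPred Δ Y W') : W = W' := by
  rcases h with ⟨hY, rfl⟩ | ⟨hY, hW⟩
  · rcases h' with ⟨_, rfl⟩ | ⟨hY', _⟩
    · rfl
    · exact absurd hY hY'
  · rcases h' with ⟨hY', rfl⟩ | ⟨_, hW'⟩
    · exact absurd hY' hY
    · exact le_antisymm (colim_le hW hW'.1) (colim_le hW' hW.1)

lemma le_succ {Δ : Set (Subobject X)} {Y W : Subobject X} (htop : ⊤ ∈ Δ)
    (h : IsSucc Δ Y W) : Y ≤ W := by
  rcases h with ⟨rfl, rfl⟩ | ⟨hY, hW⟩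
  · exact le_rfl
  · exact le_lim hW ⟨⊤, htop, lt_top_iff_ne_top.mpr hY⟩ fun Z hZ => hZ.2.le

lemma succ_le_of_lt {Δ : Set (Subobject X)} {Y W Z : Subobject X}
    (h : IsSucc Δ Y W) (hZ : Z ∈ Δ) (hYZ : Y < Z) : W ≤ Z := by
  rcases h with ⟨rfl, _⟩ | ⟨_, hb, _⟩
  · exact absurd hYZ (by simp)
  · exact hb Z ⟨hZ, hYZ⟩

lemma succ_unique {Δ : Set (Subobject X)} {Y W W' : Subobject X} (htop : ⊤ ∈ Δ)
    (h : IsSucc Δ Y W) (h' : IsSucc Δ Y W') : W = W' := by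
  rcases h with ⟨hY, rfl⟩ | ⟨hY, hW⟩
  · rcases h' with ⟨_, rfl⟩ | ⟨hY', _⟩
    · rfl
    · exact absurd hY hY'
  · rcases h' with ⟨hY', rfl⟩ | ⟨_, hW'⟩
    · exact absurd hY' hY
    · have hne : {Z | Z ∈ Δ ∧ Y < Z}.Nonempty := ⟨⊤, htop, lt_top_iff_ne_top.mpr hY⟩
      exact le_antisymm (le_lim hW' hne hW.1) (le_lim hW hne hW'.1)

lemma lower_cmp {Δ : Set (Subobject X)} (hΔ : IsSubChain Δ) {A Y Z W : Subobject X}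
    (hA : A ∈ Δ) (hY : Y ∈ Δ) (hP : IsPred Δ Y W) :
    A ≤ W ⊔ (Y ⊓ Z) ∨ W ⊔ (Y ⊓ Z) ≤ A := by
  by_cases hAY : A = Y
  · subst hAY
    exact Or.inr (sup_le (pred_le hP) inf_le_left)
  rcases hΔ.1 hA hY hAY with h | h
  · exact Or.inl ((lt_pred_le hP hA (lt_of_le_of_ne h hAY)).trans le_sup_left)
  · exact Or.inr (sup_le ((pred_le hP).trans h) (inf_le_left.trans h))

lemma upper_cmp {Δ : Set (Subobject X)} (hΔ : IsSubChain Δ) {A Y Z W : Subobject X}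
    (hA : A ∈ Δ) (hY : Y ∈ Δ) (hS : IsSucc Δ Y W) :
    A ≤ Y ⊔ (W ⊓ Z) ∨ Y ⊔ (W ⊓ Z) ≤ A := by
  by_cases hAY : A = Y
  · subst hAY
    exact Or.inl le_sup_left
  rcases hΔ.1 hA hY hAY with h | h
  · exact Or.inl (h.trans le_sup_left)
  · exact Or.inr (sup_le h (inf_le_left.trans
      (succ_le_of_lt hS hA (lt_of_le_of_ne h (Ne.symm hAY)))))

end Aux

/-- Proposition 4.10: conflations of subobject chains are subobject chains refining the
first chain. -/
theorem statement11 [EssentiallySmall.{w} 𝒜] (X : 𝒜) (Δ Γ : Set (Subobject X))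
    (hΔ : IsSubChain Δ) (hΓ : IsSubChain Γ) :
    (IsSubChain (conLower Δ Γ) ∧ Δ ⊆ conLower Δ Γ) ∧
    (IsSubChain (conUpper Δ Γ) ∧ Δ ⊆ conUpper Δ Γ) := by
  have hLsub : Δ ⊆ conLower Δ Γ := Set.subset_union_left
  have hUsub : Δ ⊆ conUpper Δ Γ := Set.subset_union_left
  refine ⟨⟨⟨?_, hLsub hΔ.2.1, hLsub hΔ.2.2⟩, hLsub⟩, ⟨⟨?_, hUsub hΔ.2.1, hUsub hΔ.2.2⟩, hUsub⟩⟩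
  · intro A hA B hB hne
    rcases hA with hA | ⟨Y, hY, Z, hZ, W, hP, rfl⟩
    · rcases hB with hB | ⟨Y, hY, Z, hZ, W, hP, rfl⟩
      · exact hΔ.1 hA hB hne
      · exact lower_cmp hΔ hA hY hP
    · rcases hB with hB | ⟨Y', hY', Z', hZ', W', hP', rfl⟩
      · exact (lower_cmp hΔ hB hY hP).symm
      · by_cases hYY : Y = Y'
        · subst hYY
          obtain rfl : W = W' := pred_unique hP hP'
          by_cases hZZ : Z = Z'
          · subst hZZ; exact absurd rfl hne
          · rcases hΓ.1 hZ hZ' hZZ with h | h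
            · exact Or.inl (sup_le le_sup_left ((inf_le_inf_left Y h).trans le_sup_right))
            · exact Or.inr (sup_le le_sup_left ((inf_le_inf_left Y h).trans le_sup_right))
        · rcases hΔ.1 hY hY' hYY with h | h
          · exact Or.inl ((sup_le (pred_le hP) inf_le_left).trans
              ((lt_pred_le hP' hY (lt_of_le_of_ne h hYY)).trans le_sup_left))
          · exact Or.inr ((sup_le (pred_le hP') inf_le_left).trans
              ((lt_pred_le hP hY' (lt_of_le_of_ne h (Ne.symm hYY))).trans le_sup_left))
  · intro A hA B hB hne
    rcases hA with hA | ⟨Y, hY, Z, hZ, W, hS, rfl⟩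
    · rcases hB with hB | ⟨Y, hY, Z, hZ, W, hS, rfl⟩
      · exact hΔ.1 hA hB hne
      · exact upper_cmp hΔ hA hY hS
    · rcases hB with hB | ⟨Y', hY', Z', hZ', W', hS', rfl⟩
      · exact (upper_cmp hΔ hB hY hS).symm
      · by_cases hYY : Y = Y'
        · subst hYY
          obtain rfl : W = W' := succ_unique hΔ.2.2 hS hS'
          by_cases hZZ : Z = Z'
          · subst hZZ; exact absurd rfl hne
          · rcases hΓ.1 hZ hZ' hZZ with h | h
            · exact Or.inl (sup_le le_sup_left ((inf_le_inf_left W h).trans le_sup_right))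
            · exact Or.inr (sup_le le_sup_left ((inf_le_inf_left W h).trans le_sup_right))
        · rcases hΔ.1 hY hY' hYY with h | h
          · exact Or.inl ((sup_le h (inf_le_left.trans
              (succ_le_of_lt hS hY' (lt_of_le_of_ne h hYY)))).trans le_sup_left)
          · exact Or.inr ((sup_le h (inf_le_left.trans
              (succ_le_of_lt hS' hY (lt_of_le_of_ne h (Ne.symm hYY))))).trans le_sup_left)

end JHS
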